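/- arXiv:2205.12423 — 3 statements merged into one kernel-verified Lean document; each statement's English description precedes it below -/
import Mathlib

section
/- Let g : {0,1}^n → ℝ and define AUC = Σ_{j=0}^{n} g(e_{1:j}), where e_{1:j} is the indicator vector of {1,...,j} (with e_{1:0} = 0). Then AUC = Σ_{u ⊆ {1,...,n}} (n − ⌈u⌉ + 1) · Δ_u, where Δ_u = Σ_{v ⊆ u} (−1)^{|u|−|v|} g(e_v) and ⌈u⌉ = max u with ⌈∅⌉ = 0. -/
open Finset

/-- The anchored interaction `Δ_u = Σ_{v ⊆ u} (−1)^{|u|−|v|} g(e_v)`, where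
points of `{0,1}^n` are identified with subsets of `Fin n` (so `e_v` is `v`). -/
noncomputable def interaction {n : ℕ} (g : Finset (Fin n) → ℝ)
    (u : Finset (Fin n)) : ℝ :=
  ∑ v ∈ u.powerset, (-1 : ℝ) ^ (u.card - v.card) * g v

/-- `⌈u⌉`: the maximum of `u` viewed as a subset of `{1,...,n}` (coordinate
`i : Fin n` corresponds to variable `i+1`), with `⌈∅⌉ = 0`. -/
def ceilSet {n : ℕ} (u : Finset (Fin n)) : ℕ :=
  u.sup fun i => i.val + 1

lemma real_sum_powerset_neg_one_pow_card {α : Type*} [DecidableEq α] {x : Finset α} :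
    (∑ m ∈ x.powerset, (-1 : ℝ) ^ m.card) = if x = ∅ then 1 else 0 := by
  have h := Finset.sum_powerset_neg_one_pow_card (x := x)
  have := congrArg (Int.cast : ℤ → ℝ) h
  push_cast at this
  simpa using this

lemma sum_interaction_powerset {n : ℕ} (g : Finset (Fin n) → ℝ) (w : Finset (Fin n)) :
    ∑ u ∈ w.powerset, interaction g u = g w := by
  unfold interaction
  have h1 : ∀ u ∈ w.powerset, ∑ v ∈ u.powerset, (-1 : ℝ) ^ (u.card - v.card) * g v
      = ∑ v ∈ w.powerset, (if v ⊆ u then (-1 : ℝ) ^ (u.card - v.card) else 0) * g v := by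
    intro u hu
    rw [mem_powerset] at hu
    have : ∑ v ∈ w.powerset, (if v ⊆ u then (-1 : ℝ) ^ (u.card - v.card) else 0) * g v
        = ∑ v ∈ w.powerset.filter (· ⊆ u), (-1 : ℝ) ^ (u.card - v.card) * g v := by
      rw [sum_filter]
      exact sum_congr rfl fun v _ => by split_ifs <;> simp
    rw [this]
    congr 1
    ext v
    simp only [mem_filter, mem_powerset]
    exact ⟨fun h => ⟨h.trans hu, h⟩, fun h => h.2⟩
  rw [sum_congr rfl h1, sum_comm]
  have h2 : ∀ v ∈ w.powerset,
      ∑ u ∈ w.powerset, (if v ⊆ u then (-1 : ℝ) ^ (u.card - v.card) else 0) * g v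
      = (if v = w then (1 : ℝ) else 0) * g v := by
    intro v hv
    rw [mem_powerset] at hv
    rw [← sum_mul]
    congr 1
    rw [← sum_filter]
    have key : ∑ u ∈ w.powerset.filter (v ⊆ ·), (-1 : ℝ) ^ (u.card - v.card)
        = ∑ s ∈ (w \ v).powerset, (-1 : ℝ) ^ s.card := by
      refine sum_nbij' (fun u => u \ v) (fun s => s ∪ v) ?_ ?_ ?_ ?_ ?_
      · intro u hu
        simp only [mem_filter, mem_powerset] at hu ⊢
        exact sdiff_subset_sdiff hu.1 le_rfl
      · intro s hs
        simp only [mem_powerset] at hs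
        simp only [mem_filter, mem_powerset]
        exact ⟨union_subset (hs.trans sdiff_subset) hv, subset_union_right⟩
      · intro u hu
        simp only [mem_filter, mem_powerset] at hu
        exact sdiff_union_of_subset hu.2
      · intro s hs
        simp only [mem_powerset] at hs
        have hd : Disjoint s v := disjoint_of_subset_left hs sdiff_disjoint
        show (s ∪ v) \ v = s
        rw [union_sdiff_right, sdiff_eq_self_of_disjoint hd]
      · intro u hu
        simp only [mem_filter, mem_powerset] at hu
        rw [card_sdiff_of_subset hu.2]
    rw [key, real_sum_powerset_neg_one_pow_card]
    have : w \ v = ∅ ↔ v = w := by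
      rw [sdiff_eq_empty_iff_subset]
      exact ⟨fun h => le_antisymm hv h, fun h => h ▸ le_rfl⟩
    split_ifs with h1' h2' h2' <;> simp_all
  rw [sum_congr rfl h2]
  simp only [ite_mul, one_mul, zero_mul]
  rw [sum_ite_eq' w.powerset w g]
  simp

/-- `AUC = Σ_{j=0}^{n} g(e_{1:j}) = Σ_{u ⊆ {1,...,n}} (n − ⌈u⌉ + 1) Δ_u`,
where `e_{1:j}` is the indicator of the first `j` coordinates. -/
theorem auc_eq_sum_interactions {n : ℕ} (g : Finset (Fin n) → ℝ) :
    ∑ j ∈ Finset.range (n + 1), g (univ.filter fun i : Fin n => i.val < j)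
      = ∑ u : Finset (Fin n), ((n + 1 - ceilSet u : ℕ) : ℝ) * interaction g u := by
  set P : ℕ → Finset (Fin n) := fun j => univ.filter fun i : Fin n => i.val < j with hP
  have step1 : ∀ j, g (P j) = ∑ u : Finset (Fin n), if u ⊆ P j then interaction g u else 0 := by
    intro j
    rw [← sum_interaction_powerset g (P j), ← sum_filter]
    congr 1
    ext u
    simp [mem_powerset]
  calc ∑ j ∈ Finset.range (n + 1), g (P j)
      = ∑ j ∈ Finset.range (n + 1), ∑ u : Finset (Fin n),
          if u ⊆ P j then interaction g u else 0 := by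
        exact sum_congr rfl fun j _ => step1 j
    _ = ∑ u : Finset (Fin n), ∑ j ∈ Finset.range (n + 1),
          if u ⊆ P j then interaction g u else 0 := Finset.sum_comm
    _ = ∑ u : Finset (Fin n), ((n + 1 - ceilSet u : ℕ) : ℝ) * interaction g u := by
        refine sum_congr rfl fun u _ => ?_
        have hsub : ∀ j, u ⊆ P j ↔ ceilSet u ≤ j := by
          intro j
          rw [ceilSet, Finset.sup_le_iff]
          constructor
          · intro h i hi
            have := h hi
            simp only [hP, mem_filter] at this
            omega
          · intro h i hi
            simp only [hP, mem_filter, mem_univ, true_and]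
            have := h i hi
            omega
        simp only [hsub]
        rw [← sum_filter]
        have : (Finset.range (n + 1)).filter (fun j => ceilSet u ≤ j)
            = Finset.Ico (ceilSet u) (n + 1) := by
          ext j
          simp only [mem_filter, Finset.mem_range, Finset.mem_Ico]
          omega
        rw [this, sum_const, Nat.card_Ico, nsmul_eq_mul]
end

section
/- Let g : {0,1}^n → ℝ with interaction terms Δ_u = Σ_{v ⊆ u} (−1)^{|u|−|v|} g(e_v). For a uniformly random permutation π of {1,...,n}, define AUC(π) = Σ_{j=0}^{n} g(e_{π({1,...,j})}) and ABC(π) = AUC(π) − (n+1)(g(0) + g(1))/2. Then E[ABC(π)] = ((n+1)/2) · Σ_{u ≠ ∅} ((1 − |u|)/(|u| + 1)) · Δ_u. -/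
open Finset

/-- Insertion AUC for the ordering given by the permutation `π`:
`AUC(π) = Σ_{j=0}^{n} g(e_{π({1,...,j})})`. -/
noncomputable def aucPerm {n : ℕ} (g : Finset (Fin n) → ℝ)
    (π : Equiv.Perm (Fin n)) : ℝ :=
  ∑ j ∈ Finset.range (n + 1),
    g ((univ.filter fun i : Fin n => i.val < j).image π)

/-- `ABC(π) = AUC(π) − (n+1)(g(0)+g(1))/2`. -/
noncomputable def abcPerm {n : ℕ} (g : Finset (Fin n) → ℝ)
    (π : Equiv.Perm (Fin n)) : ℝ :=
  aucPerm g π - ((n : ℝ) + 1) * (g ∅ + g univ) / 2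

/-! ### Auxiliary analytic lemmas -/

lemma key_rec (r : ℕ) (a : ℝ) :
    ∑ i ∈ range (r+2), (-1:ℝ)^i * ((r+1).choose i) / (a + i)
      = (∑ i ∈ range (r+1), (-1:ℝ)^i * (r.choose i) / (a + i))
        - ∑ i ∈ range (r+1), (-1:ℝ)^i * (r.choose i) / ((a+1) + i) := by
  have h1 : ∑ i ∈ range (r+2), (-1:ℝ)^i * ((r+1).choose i) / (a + i)
      = (∑ i ∈ range (r+1), (-1:ℝ)^(i+1) * ((r+1).choose (i+1)) / (a + (i+1))) + 1/a := by
    rw [Finset.sum_range_succ' (fun i => (-1:ℝ)^i * ((r+1).choose i) / (a + i)) (r+1)]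
    simp
  have h2 : ∀ i : ℕ, (-1:ℝ)^(i+1) * ((r+1).choose (i+1)) / (a + (i+1))
      = -((-1:ℝ)^i * (r.choose i) / ((a+1) + i)) + (-1:ℝ)^(i+1) * (r.choose (i+1)) / (a + (i+1)) := by
    intro i
    rw [Nat.choose_succ_succ]
    push_cast
    ring
  have h3 : ∑ i ∈ range (r+1), (-1:ℝ)^(i+1) * (r.choose (i+1)) / (a + (i+1))
      = (∑ i ∈ range (r+1), (-1:ℝ)^i * (r.choose i) / (a + i)) - 1/a := by
    have := Finset.sum_range_succ' (fun i => (-1:ℝ)^i * (r.choose i) / (a + i)) (r+1)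
    rw [Finset.sum_range_succ] at this
    simp only [Nat.choose_succ_self, Nat.cast_zero, mul_zero, zero_div, add_zero,
      Nat.choose_zero_right, Nat.cast_one, pow_zero, one_mul, Nat.cast_zero] at this
    rw [eq_comm, sub_eq_iff_eq_add]
    simpa using this
  rw [h1]
  simp only [h2, Finset.sum_add_distrib, Finset.sum_neg_distrib]
  rw [h3]
  ring

lemma key_sum (r : ℕ) : ∀ a : ℝ, 0 < a →
    ∑ i ∈ range (r+1), (-1:ℝ)^i * (r.choose i) / (a + i)
      = r.factorial / ∏ j ∈ range (r+1), (a + j) := by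
  induction r with
  | zero => intro a ha; simp
  | succ r ih =>
    intro a ha
    rw [key_rec, ih a ha, ih (a+1) (by linarith)]
    have hP : ∀ b : ℝ, 0 < b → (0:ℝ) < ∏ j ∈ range (r+1), (b + j) := by
      intro b hb
      exact Finset.prod_pos fun j _ => by positivity
    have h1 : ∏ j ∈ range (r+2), (a + j) = a * ∏ j ∈ range (r+1), ((a+1) + j) := by
      rw [Finset.prod_range_succ' (fun j => a + (j:ℝ))]
      simp only [Nat.cast_zero, add_zero, mul_comm]
      congr 1
      apply Finset.prod_congr rfl
      intro j _; push_cast; ring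
    have h2 : ∏ j ∈ range (r+2), (a + j) = (a + ((r:ℝ)+1)) * ∏ j ∈ range (r+1), (a + j) := by
      rw [Finset.prod_range_succ]
      push_cast; ring
    have hPa := hP a ha
    have hQa := hP (a+1) (by linarith : (0:ℝ) < a + 1)
    have hR : (0:ℝ) < ∏ j ∈ range (r+2), (a + j) := by
      rw [h2]; positivity
    rw [div_sub_div _ _ hPa.ne' hQa.ne', div_eq_div_iff (mul_pos hPa hQa).ne' hR.ne']
    calc ((r.factorial:ℝ) * ∏ j ∈ range (r+1), ((a+1) + j)
            - (∏ j ∈ range (r+1), (a + j)) * r.factorial) * ∏ j ∈ range (r+2), (a + j)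
        = (r.factorial:ℝ) * (∏ j ∈ range (r+1), ((a+1) + j))
            * ((a + ((r:ℝ)+1)) * ∏ j ∈ range (r+1), (a + j))
          - (∏ j ∈ range (r+1), (a + j)) * r.factorial
            * (a * ∏ j ∈ range (r+1), ((a+1) + j)) := by
          rw [← h2, ← h1]; ring
      _ = ((r+1).factorial : ℝ) * ((∏ j ∈ range (r+1), (a + j)) * ∏ j ∈ range (r+1), ((a+1) + j)) := by
          push_cast [Nat.factorial_succ]; ring

lemma prod_fact (m : ℕ) : ∀ k : ℕ,
    (m.factorial : ℝ) * ∏ j ∈ range k, ((m:ℝ) + 1 + j) = (m + k).factorial := by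
  intro k
  induction k with
  | zero => simp
  | succ k ih =>
    rw [Finset.prod_range_succ, ← mul_assoc, ih]
    have : m + (k+1) = (m + k) + 1 := by ring
    rw [this, Nat.factorial_succ]
    push_cast; ring

lemma coef_sum (m r : ℕ) :
    ∑ i ∈ range (r+1), (-1:ℝ)^i * (r.choose i) * ((1 - ((m:ℝ)+i)) / (((m:ℝ)+i) + 1))
      = 2 * m.factorial * r.factorial / ((m + r + 1).factorial : ℝ)
        - (if r = 0 then 1 else 0) := by
  have hsplit : ∀ i ∈ range (r+1),
      (-1:ℝ)^i * (r.choose i) * ((1 - ((m:ℝ)+i)) / (((m:ℝ)+i) + 1))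
        = 2 * ((-1:ℝ)^i * (r.choose i) / (((m:ℝ)+1) + i)) - (-1:ℝ)^i * (r.choose i) := by
    intro i _
    have hne : ((m:ℝ)+i) + 1 ≠ 0 := by positivity
    field_simp
    ring
  rw [Finset.sum_congr rfl hsplit, Finset.sum_sub_distrib, ← Finset.mul_sum,
    key_sum r ((m:ℝ)+1) (by positivity)]
  have halt : ∑ i ∈ range (r+1), (-1:ℝ)^i * (r.choose i)
      = if r = 0 then 1 else 0 := by
    have := Int.alternating_sum_range_choose (n := r)
    have h2 := congrArg (fun z : ℤ => (z : ℝ)) this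
    push_cast at h2
    exact h2
  rw [halt]
  congr 1
  have hprod : ∏ j ∈ range (r+1), (((m:ℝ)+1) + j) = ((m + (r+1)).factorial : ℝ) / m.factorial := by
    rw [eq_div_iff (by positivity : (m.factorial:ℝ) ≠ 0), mul_comm, ← prod_fact m (r+1)]
  rw [hprod]
  have : m + (r+1) = m + r + 1 := by ring
  rw [this]
  have hf : ((m+r+1).factorial : ℝ) ≠ 0 := by positivity
  have hm : (m.factorial : ℝ) ≠ 0 := by positivity
  field_simp

/-! ### Permutation counting lemmas -/

lemma exists_perm_image {n : ℕ} (s t : Finset (Fin n)) (h : s.card = t.card) :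
    ∃ σ : Equiv.Perm (Fin n), s.image σ = t := by
  classical
  have e : {x // x ∈ s} ≃ {x // x ∈ t} :=
    (Fintype.equivOfCardEq (by simpa using h))
  refine ⟨e.extendSubtype, ?_⟩
  apply Finset.eq_of_subset_of_card_le
  · intro x hx
    simp only [Finset.mem_image] at hx
    obtain ⟨y, hy, rfl⟩ := hx
    exact e.extendSubtype_mem y hy
  · rw [Finset.card_image_of_injective _ e.extendSubtype.injective, h]

lemma sum_perm_image {n : ℕ} (f : Finset (Fin n) → ℝ) (s : Finset (Fin n)) :
    ∑ π : Equiv.Perm (Fin n), f (s.image π)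
      = (s.card.factorial * (n - s.card).factorial : ℝ)
        * ∑ t ∈ powersetCard s.card (univ : Finset (Fin n)), f t := by
  classical
  set j := s.card with hj
  have inv : ∀ t : Finset (Fin n), t.card = j →
      ∑ π : Equiv.Perm (Fin n), f (t.image π) = ∑ π : Equiv.Perm (Fin n), f (s.image π) := by
    intro t ht
    obtain ⟨σ, hσ⟩ := exists_perm_image s t (by rw [ht])
    rw [← hσ]
    rw [← Equiv.sum_comp (Equiv.mulRight σ) (fun π => f (s.image π))]
    apply Fintype.sum_congr
    intro π
    have : s.image ⇑(Equiv.mulRight σ π) = (s.image σ).image π := by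
      simp only [Equiv.coe_mulRight]
      rw [Finset.image_image]
      rfl
    rw [this]
  have inner : ∀ π : Equiv.Perm (Fin n),
      ∑ t ∈ powersetCard j (univ : Finset (Fin n)), f (t.image π)
        = ∑ t ∈ powersetCard j (univ : Finset (Fin n)), f t := by
    intro π
    apply Finset.sum_nbij' (fun t => t.image π) (fun t => t.image π.symm)
    · intro t ht
      simp only [Finset.mem_powersetCard_univ] at ht ⊢
      rw [Finset.card_image_of_injective _ π.injective, ht]
    · intro t ht
      simp only [Finset.mem_powersetCard_univ] at ht ⊢
      rw [Finset.card_image_of_injective _ π.symm.injective, ht]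
    · intro t _; rw [Finset.image_image]; simp
    · intro t _; rw [Finset.image_image]; simp
    · intro t _; rfl
  have hcount : ((n.choose j : ℝ)) * ∑ π : Equiv.Perm (Fin n), f (s.image π)
      = (n.factorial : ℝ) * ∑ t ∈ powersetCard j (univ : Finset (Fin n)), f t := by
    have h1 : ∑ t ∈ powersetCard j (univ : Finset (Fin n)),
        (∑ π : Equiv.Perm (Fin n), f (t.image π))
        = ((powersetCard j (univ : Finset (Fin n))).card : ℝ)
          * ∑ π : Equiv.Perm (Fin n), f (s.image π) := by
      rw [Finset.sum_congr rfl (fun t ht => inv t (Finset.mem_powersetCard_univ.mp ht))]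
      rw [Finset.sum_const, nsmul_eq_mul]
    have h2 : ∑ t ∈ powersetCard j (univ : Finset (Fin n)),
        (∑ π : Equiv.Perm (Fin n), f (t.image π))
        = (n.factorial : ℝ) * ∑ t ∈ powersetCard j (univ : Finset (Fin n)), f t := by
      rw [Finset.sum_comm]
      rw [Fintype.sum_congr _ _ inner]
      rw [Finset.sum_const, nsmul_eq_mul]
      congr 1
      simp [Fintype.card_perm]
    rw [Finset.card_powersetCard, Finset.card_univ, Fintype.card_fin] at h1
    rw [← h1, h2]
  have hchoose : (n.choose j : ℝ) ≠ 0 := by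
    have : 0 < n.choose j := Nat.choose_pos (by simpa [hj] using Finset.card_le_univ s)
    positivity
  have hfact : (n.factorial : ℝ) = (n.choose j : ℝ) * (j.factorial * (n - j).factorial) := by
    have hle : j ≤ n := by simpa [hj] using Finset.card_le_univ s
    rw [← Nat.choose_mul_factorial_mul_factorial hle]
    push_cast; ring
  apply mul_left_cancel₀ hchoose
  rw [hcount, hfact]
  ring

lemma card_prefix {n : ℕ} (j : ℕ) (hj : j ≤ n) :
    (univ.filter fun i : Fin n => i.val < j).card = j := by
  have : (univ.filter fun i : Fin n => i.val < j)
      = (Finset.range j).attachFin (fun m hm => lt_of_lt_of_le (Finset.mem_range.mp hm) hj) := by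
    ext i
    simp [Finset.mem_attachFin]
  rw [this, Finset.card_attachFin, Finset.card_range]

lemma sum_auc {n : ℕ} (g : Finset (Fin n) → ℝ) :
    ∑ π : Equiv.Perm (Fin n), aucPerm g π
      = ∑ t : Finset (Fin n), (t.card.factorial * (n - t.card).factorial : ℝ) * g t := by
  unfold aucPerm
  rw [Finset.sum_comm]
  have step : ∀ j ∈ range (n+1),
      ∑ π : Equiv.Perm (Fin n), g ((univ.filter fun i : Fin n => i.val < j).image π)
        = ∑ t ∈ powersetCard j (univ : Finset (Fin n)),
            (j.factorial * (n - j).factorial : ℝ) * g t := by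
    intro j hj
    have hle : j ≤ n := Nat.lt_succ_iff.mp (Finset.mem_range.mp hj)
    rw [sum_perm_image g _, card_prefix j hle, ← Finset.mul_sum]
  rw [Finset.sum_congr rfl step]
  have expand : ∑ t : Finset (Fin n), (t.card.factorial * (n - t.card).factorial : ℝ) * g t
      = ∑ j ∈ range (n+1), ∑ t ∈ powersetCard j (univ : Finset (Fin n)),
          (j.factorial * (n - j).factorial : ℝ) * g t := by
    rw [← Finset.powerset_univ, Finset.sum_powerset,
      Finset.card_univ, Fintype.card_fin]
    apply Finset.sum_congr rfl
    intro j _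
    apply Finset.sum_congr rfl
    intro t ht
    rw [Finset.mem_powersetCard_univ.mp ht]
  rw [expand]

/-! ### Coefficient evaluation -/

lemma coef_eval {n : ℕ} (v : Finset (Fin n)) :
    ∑ u ∈ univ.filter (fun u => v ⊆ u),
        ((1 - (u.card:ℝ))/((u.card:ℝ)+1)) * (-1:ℝ)^(u.card - v.card)
      = 2 * v.card.factorial * (n - v.card).factorial / ((n+1).factorial : ℝ)
        - (if v = univ then 1 else 0) := by
  classical
  set m := v.card with hm
  have hle : m ≤ n := by simpa [hm] using Finset.card_le_univ v
  have step1 : ∑ u ∈ univ.filter (fun u => v ⊆ u),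
      ((1 - (u.card:ℝ))/((u.card:ℝ)+1)) * (-1:ℝ)^(u.card - v.card)
      = ∑ w ∈ vᶜ.powerset,
          ((1 - ((m + w.card : ℕ):ℝ))/(((m + w.card : ℕ):ℝ)+1)) * (-1:ℝ)^(w.card) := by
    apply Finset.sum_nbij' (fun u => u \ v) (fun w => w ∪ v)
    · intro u hu
      simp only [Finset.mem_filter, Finset.mem_univ, true_and] at hu
      rw [Finset.mem_powerset]
      intro x hx
      simp only [Finset.mem_sdiff] at hx
      simp [Finset.mem_compl, hx.2]
    · intro w hw
      simp only [Finset.mem_filter, Finset.mem_univ, true_and]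
      exact Finset.subset_union_right
    · intro u hu
      simp only [Finset.mem_filter, Finset.mem_univ, true_and] at hu
      exact Finset.sdiff_union_of_subset hu
    · intro w hw
      rw [Finset.mem_powerset] at hw
      have hdisj : Disjoint w v := Finset.disjoint_left.mpr
        (fun x hx => by simpa [Finset.mem_compl] using hw hx)
      rw [Finset.union_sdiff_right, Finset.sdiff_eq_self_of_disjoint hdisj]
    · intro u hu
      simp only [Finset.mem_filter, Finset.mem_univ, true_and] at hu
      have hcard : u.card = m + (u \ v).card := by
        rw [hm, Finset.card_sdiff_of_subset hu]
        have := Finset.card_le_card hu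
        omega
      rw [hcard, Nat.add_sub_cancel_left]
  rw [step1, Finset.sum_powerset]
  have hcompl : vᶜ.card = n - m := by
    rw [Finset.card_compl, Fintype.card_fin, hm]
  rw [hcompl]
  have step2 : ∀ i ∈ range (n - m + 1),
      ∑ w ∈ powersetCard i vᶜ,
          ((1 - ((m + w.card : ℕ):ℝ))/(((m + w.card : ℕ):ℝ)+1)) * (-1:ℝ)^(w.card)
        = (-1:ℝ)^i * ((n-m).choose i) * ((1 - ((m:ℝ)+i)) / (((m:ℝ)+i) + 1)) := by
    intro i _
    have hconst : ∀ w ∈ powersetCard i vᶜ,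
        ((1 - ((m + w.card : ℕ):ℝ))/(((m + w.card : ℕ):ℝ)+1)) * (-1:ℝ)^(w.card)
          = ((1 - ((m:ℝ)+i))/(((m:ℝ)+i)+1)) * (-1:ℝ)^i := by
      intro w hw
      rw [(Finset.mem_powersetCard.mp hw).2]
      push_cast
      ring
    rw [Finset.sum_congr rfl hconst, Finset.sum_const, Finset.card_powersetCard, hcompl,
      nsmul_eq_mul]
    ring
  rw [Finset.sum_congr rfl step2, coef_sum m (n - m)]
  have h1 : m + (n - m) + 1 = n + 1 := by omega
  rw [h1]
  congr 1
  have h2 : (n - m = 0) ↔ (v = univ) := by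
    rw [← Finset.card_eq_iff_eq_univ, Fintype.card_fin, ← hm]
    omega
  simp only [h2]

/-! ### The swap of summation -/

lemma rhs_swap {n : ℕ} (g : Finset (Fin n) → ℝ) :
    ∑ u : Finset (Fin n), ((1 - (u.card:ℝ))/((u.card:ℝ)+1)) * interaction g u
      = ∑ v : Finset (Fin n),
          (∑ u ∈ univ.filter (fun u => v ⊆ u),
            ((1 - (u.card:ℝ))/((u.card:ℝ)+1)) * (-1:ℝ)^(u.card - v.card)) * g v := by
  classical
  unfold interaction
  have step1 : ∀ u : Finset (Fin n),
      ((1 - (u.card:ℝ))/((u.card:ℝ)+1)) * ∑ v ∈ u.powerset, (-1:ℝ)^(u.card - v.card) * g v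
        = ∑ v : Finset (Fin n), if v ⊆ u then
            ((1 - (u.card:ℝ))/((u.card:ℝ)+1)) * (-1:ℝ)^(u.card - v.card) * g v else 0 := by
    intro u
    rw [Finset.mul_sum, ← Finset.sum_filter]
    have : univ.filter (fun v => v ⊆ u) = u.powerset := by
      ext v; simp [Finset.mem_powerset]
    rw [this]
    apply Finset.sum_congr rfl
    intro v _; ring
  rw [Fintype.sum_congr _ _ step1, Finset.sum_comm]
  apply Fintype.sum_congr
  intro v
  rw [← Finset.sum_filter, Finset.sum_mul]

/-- The expected ABC under a uniformly random permutation: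
`E[ABC(π)] = ((n+1)/2) Σ_{u ≠ ∅} ((1 − |u|)/(|u| + 1)) Δ_u`. -/
theorem expected_abc (n : ℕ) (g : Finset (Fin n) → ℝ) :
    (∑ π : Equiv.Perm (Fin n), abcPerm g π) / (n.factorial : ℝ)
      = (((n : ℝ) + 1) / 2) *
        ∑ u ∈ (univ : Finset (Finset (Fin n))).erase ∅,
          ((1 - (u.card : ℝ)) / ((u.card : ℝ) + 1)) * interaction g u := by
  classical
  have hfac : (n.factorial : ℝ) ≠ 0 := by positivity
  have habc : ∑ π : Equiv.Perm (Fin n), abcPerm g π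
      = (∑ t : Finset (Fin n), (t.card.factorial * (n - t.card).factorial : ℝ) * g t)
        - (n.factorial : ℝ) * (((n:ℝ)+1) * (g ∅ + g univ) / 2) := by
    unfold abcPerm
    rw [Finset.sum_sub_distrib, sum_auc, Finset.sum_const, Finset.card_univ,
      Fintype.card_perm, Fintype.card_fin, nsmul_eq_mul]
  have hrhs : ∑ u ∈ (univ : Finset (Finset (Fin n))).erase ∅,
        ((1 - (u.card : ℝ)) / ((u.card : ℝ) + 1)) * interaction g u
      = (∑ v : Finset (Fin n),
          (2 * v.card.factorial * (n - v.card).factorial / ((n+1).factorial : ℝ)) * g v)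
        - g univ - g ∅ := by
    rw [Finset.sum_erase_eq_sub (Finset.mem_univ ∅)]
    have h0 : ((1 - (((∅ : Finset (Fin n)).card : ℕ) : ℝ)) / ((((∅ : Finset (Fin n)).card : ℕ) : ℝ) + 1))
        * interaction g ∅ = g ∅ := by
      simp [interaction]
    rw [h0, rhs_swap g]
    have hterm : ∀ v : Finset (Fin n),
        (∑ u ∈ univ.filter (fun u => v ⊆ u),
            ((1 - (u.card:ℝ))/((u.card:ℝ)+1)) * (-1:ℝ)^(u.card - v.card)) * g v
        = (2 * v.card.factorial * (n - v.card).factorial / ((n+1).factorial : ℝ)) * g v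
          - (if v = univ then (1:ℝ) else 0) * g v := by
      intro v
      rw [coef_eval v]
      ring
    rw [Fintype.sum_congr _ _ hterm, Finset.sum_sub_distrib]
    have huniv : ∑ v : Finset (Fin n), (if v = univ then (1:ℝ) else 0) * g v = g univ := by
      simp [ite_mul]
    rw [huniv]
  rw [habc, hrhs, sub_div]
  have hmain : (∑ t : Finset (Fin n), (t.card.factorial * (n - t.card).factorial : ℝ) * g t)
        / (n.factorial : ℝ)
      = (((n:ℝ)+1)/2) * ∑ v : Finset (Fin n),
          (2 * v.card.factorial * (n - v.card).factorial / ((n+1).factorial : ℝ)) * g v := by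
    rw [Finset.sum_div, Finset.mul_sum]
    apply Finset.sum_congr rfl
    intro t _
    have hfs : ((n+1).factorial : ℝ) = ((n:ℝ)+1) * n.factorial := by
      rw [Nat.factorial_succ]; push_cast; ring
    rw [hfs]
    have h1 : ((n:ℝ)+1) ≠ 0 := by positivity
    field_simp
  rw [hmain]
  have hc : (n.factorial : ℝ) * (((n:ℝ)+1) * (g ∅ + g univ) / 2) / (n.factorial : ℝ)
      = ((n:ℝ)+1) * (g ∅ + g univ) / 2 := by
    field_simp
  rw [hc]
  ring
end

section
/- Let h : ℝ → ℝ be nondecreasing, β_0 ∈ ℝ, and β_1 ≥ β_2 ≥ ... ≥ β_n. For a permutation π of {1,...,n}, let AUC(π) = Σ_{j=0}^n h(β_0 + Σ_{ℓ=1}^j β_{π(ℓ)}). Then the identity permutation maximizes AUC over all permutations. -/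
open Finset

lemma strictMono_le_apply {n j : ℕ} {f : Fin j → Fin n} (hf : StrictMono f) (k : Fin j) :
    (k : ℕ) ≤ (f k : ℕ) := by
  obtain ⟨m, hm⟩ := k
  induction m with
  | zero => exact Nat.zero_le _
  | succ m ih =>
    have hm' : m < j := Nat.lt_of_succ_lt hm
    have h1 : f ⟨m, hm'⟩ < f ⟨m + 1, hm⟩ := hf (by simp [Fin.lt_iff_val_lt_val])
    have h2 : m ≤ ((f ⟨m, hm'⟩ : Fin n) : ℕ) := ih hm'
    have h3 := Fin.lt_iff_val_lt_val.mp h1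
    show m + 1 ≤ _
    omega

lemma filter_lt_eq_map {n j : ℕ} (hj : j ≤ n) :
    (univ.filter fun i : Fin n => i.val < j) = Finset.map (Fin.castLEEmb hj) univ := by
  ext i
  simp only [mem_filter, mem_univ, true_and, Finset.mem_map, Fin.castLEEmb, Fin.castLE,
    Function.Embedding.coeFn_mk]
  constructor
  · intro hi
    exact ⟨⟨i.val, hi⟩, rfl⟩
  · rintro ⟨k, -, rfl⟩
    exact k.2

lemma key_sum_le {n : ℕ} (β : Fin n → ℝ) (hβ : ∀ i j : Fin n, i ≤ j → β j ≤ β i)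
    {j : ℕ} (hj : j ≤ n) (S : Finset (Fin n)) (hS : S.card = j) :
    ∑ i ∈ S, β i ≤ ∑ i ∈ univ.filter fun i : Fin n => i.val < j, β i := by
  rw [filter_lt_eq_map hj, Finset.sum_map]
  have hmap : S = Finset.map (S.orderEmbOfFin hS).toEmbedding univ := by
    ext i
    simp only [Finset.mem_map, mem_univ, true_and]
    constructor
    · intro hi
      have := (S.range_orderEmbOfFin hS)
      rw [Set.ext_iff] at this
      obtain ⟨k, hk⟩ := (this i).mpr hi
      exact ⟨k, hk⟩
    · rintro ⟨k, rfl⟩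
      exact S.orderEmbOfFin_mem hS k
  rw [hmap, Finset.sum_map]
  apply Finset.sum_le_sum
  intro k _
  apply hβ
  have := strictMono_le_apply (S.orderEmbOfFin hS).strictMono k
  simpa [Fin.le_iff_val_le_val, Fin.castLEEmb, Fin.castLE] using this

/-- `AUC(π) = Σ_{j=0}^n h(β₀ + Σ_{ℓ=1}^j β_{π(ℓ)})`, where positions
`1,...,n` are represented by `Fin n` (position `ℓ` has `ℓ.val = ℓ − 1`). -/
noncomputable def aucMono {n : ℕ} (h : ℝ → ℝ) (β₀ : ℝ) (β : Fin n → ℝ)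
    (π : Equiv.Perm (Fin n)) : ℝ :=
  ∑ j ∈ Finset.range (n + 1),
    h (β₀ + ∑ l ∈ univ.filter fun i : Fin n => i.val < j, β (π l))

/-- If `h` is nondecreasing and `β₁ ≥ β₂ ≥ ⋯ ≥ β_n`, then the identity
permutation maximizes `AUC` over all permutations. -/
theorem identity_maximizes_auc (n : ℕ) (h : ℝ → ℝ) (hh : Monotone h)
    (β₀ : ℝ) (β : Fin n → ℝ) (hβ : ∀ i j : Fin n, i ≤ j → β j ≤ β i) :
    ∀ π : Equiv.Perm (Fin n),
      aucMono h β₀ β π ≤ aucMono h β₀ β (Equiv.refl (Fin n)) := by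
  intro π
  unfold aucMono
  apply Finset.sum_le_sum
  intro j hj
  have hjn : j ≤ n := Nat.lt_succ_iff.mp (Finset.mem_range.mp hj)
  apply hh
  apply add_le_add (le_refl _)
  have himg : ∑ l ∈ univ.filter (fun i : Fin n => i.val < j), β (π l)
      = ∑ i ∈ (univ.filter fun i : Fin n => i.val < j).image π, β i := by
    rw [Finset.sum_image (fun a _ b _ hab => π.injective hab)]
  rw [himg]
  simp only [Equiv.refl_apply]
  apply key_sum_le β hβ hjn
  rw [Finset.card_image_of_injective _ π.injective, filter_lt_eq_map hjn]
  simp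
end
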